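/- Second-order interpolation on the reference triangle reproduces quadratic polynomials exactly: for every real polynomial p(ξ,η) in two variables of total degree at most 2 and all real ξ, η, one has p(ξ,η) = Σᵢ₌₁⁶ Lᵢ(ξ,η)·p(nᵢ). -/
import Mathlib


/-- The six second-order triangular shape functions on the reference triangle. -/
noncomputable def L : Fin 6 → ℝ → ℝ → ℝ :=
  ![fun ξ η => 2*(1-ξ-η)*(1/2-ξ-η),
    fun ξ _ => 2*ξ*(ξ-1/2),
    fun _ η => 2*η*(η-1/2),
    fun ξ η => 4*ξ*(1-ξ-η),
    fun ξ η => 4*ξ*η,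
    fun ξ η => 4*η*(1-ξ-η)]

/-- The six interpolation nodes of the second-order reference triangle,
as points of `Fin 2 → ℝ`. -/
noncomputable def node : Fin 6 → Fin 2 → ℝ :=
  ![![0, 0], ![1, 0], ![0, 1], ![1/2, 0], ![1/2, 1/2], ![0, 1/2]]

lemma mono_key (c ξ η : ℝ) (a b : ℕ) (hab : a + b ≤ 2) :
    c * ξ ^ a * η ^ b = ∑ i : Fin 6, L i ξ η * (c * (node i 0) ^ a * (node i 1) ^ b) := by
  have ha : a ≤ 2 := le_trans (Nat.le_add_right a b) hab
  have hb : b ≤ 2 := le_trans (Nat.le_add_left b a) hab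
  interval_cases a <;> interval_cases b <;>
    simp_all [L, node, Fin.sum_univ_six, show (5:Fin 6) = (4:Fin 5).succ from rfl,
      Matrix.cons_val_succ, Matrix.vecHead, Matrix.vecTail] <;> ring

/-- Second-order interpolation on the reference triangle reproduces quadratic
polynomials exactly. -/
theorem interpolation_reproduces_quadratics (p : MvPolynomial (Fin 2) ℝ)
    (hdeg : p.totalDegree ≤ 2) (ξ η : ℝ) :
    MvPolynomial.eval ![ξ, η] p
      = ∑ i : Fin 6, L i ξ η * MvPolynomial.eval (node i) p := by
  have heval : ∀ (v : Fin 2 → ℝ),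
      MvPolynomial.eval v p
        = ∑ d ∈ p.support, p.coeff d * (v 0) ^ (d 0) * (v 1) ^ (d 1) := by
    intro v
    rw [MvPolynomial.eval_eq']
    refine Finset.sum_congr rfl fun d _ => ?_
    rw [Fin.prod_univ_two, mul_assoc]
  rw [heval]
  have : ∀ i : Fin 6, L i ξ η * MvPolynomial.eval (node i) p
      = ∑ d ∈ p.support, L i ξ η * (p.coeff d * (node i 0) ^ (d 0) * (node i 1) ^ (d 1)) := by
    intro i
    rw [heval, Finset.mul_sum]
  simp_rw [this]
  rw [Finset.sum_comm]
  refine Finset.sum_congr rfl fun d hd => ?_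
  apply mono_key
  have := MvPolynomial.le_totalDegree hd
  have hsum : d.sum (fun _ e => e) = d 0 + d 1 := by
    rw [Finsupp.sum_fintype _ _ (fun _ => rfl), Fin.sum_univ_two]
  omega
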